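/- Let G be a graph with maximum degree Δ and let α be a frozen (Δ+1)-colouring of G. For every pair of distinct colours a, b ∈ Fin (Δ+1), the subgraph of G induced by the vertices coloured a or b is a perfect matching of that vertex set (i.e., it is 1-regular). -/
import Mathlib


/-- If `α` is a frozen `(Δ+1)`-colouring of a graph `G` with maximum
degree `Δ`, then for every pair of distinct colours `a, b`, the subgraph induced by
the vertices coloured `a` or `b` is `1`-regular (a perfect matching on that set). -/
theorem stmt_2 {V : Type*} [Fintype V] [DecidableEq V] (G : SimpleGraph V)
    [DecidableRel G.Adj] (Δ : ℕ) (hΔ : ∀ v, G.degree v ≤ Δ)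
    (α : V → Fin (Δ + 1))
    (hproper : ∀ u v, G.Adj u v → α u ≠ α v)
    (hfrozen : ∀ v c, ∃ u, (u = v ∨ G.Adj v u) ∧ α u = c) :
    ∀ a b : Fin (Δ + 1), a ≠ b → ∀ v : V, (α v = a ∨ α v = b) →
      ∃! u : V, G.Adj v u ∧ (α u = a ∨ α u = b) := by
  classical
  intro a b hab v hv
  set S := G.neighborFinset v with hS
  -- every colour other than α v appears on a neighbour
  have hsurj : ∀ c : Fin (Δ + 1), c ≠ α v → ∃ u ∈ S, α u = c := by
    intro c hc
    obtain ⟨u, hu, huc⟩ := hfrozen v c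
    rcases hu with rfl | hadj
    · exact absurd huc.symm hc
    · exact ⟨u, (G.mem_neighborFinset v u).mpr hadj, huc⟩
  have himg : Finset.univ.erase (α v) ⊆ S.image α := by
    intro c hc
    obtain ⟨u, huS, huc⟩ := hsurj c (Finset.ne_of_mem_erase hc)
    exact Finset.mem_image.mpr ⟨u, huS, huc⟩
  have hcardS : S.card ≤ Δ := by
    have := hΔ v
    rwa [SimpleGraph.degree] at this
  have hcard_img : Δ ≤ (S.image α).card := by
    have h1 : (Finset.univ.erase (α v)).card = Δ := by
      rw [Finset.card_erase_of_mem (Finset.mem_univ _), Finset.card_univ,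
        Fintype.card_fin]; rfl
    calc Δ = (Finset.univ.erase (α v)).card := h1.symm
      _ ≤ (S.image α).card := Finset.card_le_card himg
  have hinj : Set.InjOn α ↑S :=
    Finset.injOn_of_card_image_eq
      (le_antisymm Finset.card_image_le (hcardS.trans hcard_img))
  -- the "other" colour
  obtain ⟨c, hcab, hcne⟩ : ∃ c, (c = a ∨ c = b) ∧ c ≠ α v := by
    rcases hv with h | h
    · exact ⟨b, Or.inr rfl, by rw [h]; exact hab.symm⟩
    · exact ⟨a, Or.inl rfl, by rw [h]; exact hab⟩
  obtain ⟨u, huS, huc⟩ := hsurj c hcne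
  refine ⟨u, ⟨(G.mem_neighborFinset v u).mp huS, by
    rcases hcab with rfl | rfl
    · exact Or.inl huc
    · exact Or.inr huc⟩, ?_⟩
  rintro u' ⟨hadj', hcol'⟩
  have hu'S : u' ∈ S := (G.mem_neighborFinset v u').mpr hadj'
  have hne : α u' ≠ α v := (hproper v u' hadj').symm
  have hc' : α u' = c := by
    rcases hcol' with h | h <;> rcases hv with h2 | h2 <;>
      rcases hcab with rfl | rfl <;> simp_all
  exact hinj hu'S huS (hc'.trans huc.symm)
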